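/- The spark of a unit-norm column dictionary D satisfies spark(D) ≥ 1 + 1/μ(D), where spark(D) is the smallest number of linearly dependent columns. -/

import Mathlib

open Matrix

noncomputable def colInner {n k : ℕ} (D : Matrix (Fin n) (Fin k) ℝ) (i j : Fin k) : ℝ :=
  ∑ r, D r i * D r j

noncomputable def mutualCoherence {n k : ℕ} (D : Matrix (Fin n) (Fin k) ℝ)
    (hne : (Finset.univ.offDiag : Finset (Fin k × Fin k)).Nonempty) : ℝ :=
  Finset.sup' Finset.univ.offDiag hne (fun p => |colInner D p.1 p.2|)

noncomputable def l0norm {k : ℕ} (θ : Fin k → ℝ) : ℕ :=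
  (Finset.univ.filter fun i => θ i ≠ 0).card

/-- Spark: the smallest number of linearly dependent columns, i.e. the least
ℓ0 norm of a nonzero kernel vector. -/
noncomputable def spark {n k : ℕ} (D : Matrix (Fin n) (Fin k) ℝ) : ℕ :=
  sInf {c : ℕ | ∃ v : Fin k → ℝ, v ≠ 0 ∧ D.mulVec v = 0 ∧ l0norm v = c}

theorem stmt6 {n k : ℕ} (D : Matrix (Fin n) (Fin k) ℝ)
    (hne : (Finset.univ.offDiag : Finset (Fin k × Fin k)).Nonempty)
    (hunit : ∀ i : Fin k, colInner D i i = 1)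
    (hmu : 0 < mutualCoherence D hne)
    (hker : ∃ v : Fin k → ℝ, v ≠ 0 ∧ D.mulVec v = 0) :
    1 + 1 / mutualCoherence D hne ≤ (spark D : ℝ) := by
  set μ := mutualCoherence D hne with hμ
  -- the set defining spark is nonempty
  have hset : {c : ℕ | ∃ v : Fin k → ℝ, v ≠ 0 ∧ D.mulVec v = 0 ∧ l0norm v = c}.Nonempty := by
    obtain ⟨v, hv, hDv⟩ := hker
    exact ⟨l0norm v, v, hv, hDv, rfl⟩
  obtain ⟨v, hv, hDv, hcard⟩ := Nat.sInf_mem hset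
  set S := Finset.univ.filter (fun j => v j ≠ 0) with hS
  have hSne : S.Nonempty := by
    by_contra h
    apply hv
    funext j
    by_contra hj
    simp only [Pi.zero_apply] at hj
    exact h ⟨j, by simp [hS, hj]⟩
  -- Gram relation
  have hgram : ∀ i : Fin k, ∑ j, colInner D i j * v j = 0 := by
    intro i
    have : ∑ j, colInner D i j * v j = ∑ r, D r i * (D.mulVec v r) := by
      simp only [colInner, Matrix.mulVec, dotProduct, Finset.sum_mul,
        Finset.mul_sum]
      rw [Finset.sum_comm]
      simp [mul_assoc]
    rw [this, hDv]
    simp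
  -- pick max entry
  obtain ⟨i, hiS, hmax⟩ := S.exists_max_image (fun j => |v j|) hSne
  have hvi : v i ≠ 0 := by simpa [hS] using hiS
  have hvipos : 0 < |v i| := abs_pos.mpr hvi
  -- coherence bound
  have hcoh : ∀ j : Fin k, j ≠ i → |colInner D i j| ≤ μ := by
    intro j hj
    exact Finset.le_sup' (f := fun p : Fin k × Fin k => |colInner D p.1 p.2|)
      (by simp [Finset.mem_offDiag, hj.symm] : (i, j) ∈ Finset.univ.offDiag)
  -- split off the i term
  have hsplit : v i + ∑ j ∈ Finset.univ.erase i, colInner D i j * v j = 0 := by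
    have := hgram i
    rwa [← Finset.add_sum_erase _ _ (Finset.mem_univ i), hunit i, one_mul] at this
  have hkey : |v i| ≤ ∑ j ∈ Finset.univ.erase i, μ * |v j| := by
    have h1 : v i = -∑ j ∈ Finset.univ.erase i, colInner D i j * v j := by linarith
    calc |v i| = |∑ j ∈ Finset.univ.erase i, colInner D i j * v j| := by
          rw [h1, abs_neg]
      _ ≤ ∑ j ∈ Finset.univ.erase i, |colInner D i j * v j| :=
          Finset.abs_sum_le_sum_abs _ _
      _ ≤ ∑ j ∈ Finset.univ.erase i, μ * |v j| := by
          apply Finset.sum_le_sum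
          intro j hj
          rw [abs_mul]
          exact mul_le_mul_of_nonneg_right (hcoh j (Finset.ne_of_mem_erase hj)) (abs_nonneg _)
  -- restrict the sum to the support
  have hrestrict : ∑ j ∈ Finset.univ.erase i, μ * |v j| = ∑ j ∈ S.erase i, μ * |v j| := by
    symm
    apply Finset.sum_subset
    · intro j hj
      rcases Finset.mem_erase.mp hj with ⟨hji, hjS⟩
      exact Finset.mem_erase.mpr ⟨hji, Finset.mem_univ j⟩
    · intro j hj hjn
      have : v j = 0 := by
        by_contra h
        exact hjn (Finset.mem_erase.mpr ⟨(Finset.mem_erase.mp hj).1, by simp [hS, h]⟩)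
      simp [this]
  have hbound : ∑ j ∈ S.erase i, μ * |v j| ≤ (S.erase i).card * (μ * |v i|) := by
    have : ∀ j ∈ S.erase i, μ * |v j| ≤ μ * |v i| := by
      intro j hj
      exact mul_le_mul_of_nonneg_left (hmax j (Finset.mem_of_mem_erase hj)) (le_of_lt hmu)
    calc ∑ j ∈ S.erase i, μ * |v j| ≤ ∑ j ∈ S.erase i, μ * |v i| :=
          Finset.sum_le_sum this
      _ = (S.erase i).card * (μ * |v i|) := by
          rw [Finset.sum_const, nsmul_eq_mul]
  have hcardS : S.card = spark D := by simpa [l0norm, hS, spark] using hcard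
  have hcarderase : ((S.erase i).card : ℝ) = (spark D : ℝ) - 1 := by
    rw [Finset.card_erase_of_mem hiS, ← hcardS]
    have h1 : 1 ≤ S.card := Finset.card_pos.mpr hSne
    push_cast [Nat.cast_sub h1]
    ring
  have hfin : |v i| ≤ ((spark D : ℝ) - 1) * (μ * |v i|) := by
    calc |v i| ≤ ∑ j ∈ Finset.univ.erase i, μ * |v j| := hkey
      _ = ∑ j ∈ S.erase i, μ * |v j| := hrestrict
      _ ≤ (S.erase i).card * (μ * |v i|) := hbound
      _ = ((spark D : ℝ) - 1) * (μ * |v i|) := by rw [hcarderase]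
  have h1le : 1 ≤ ((spark D : ℝ) - 1) * μ := by
    have := hfin
    rw [show ((spark D : ℝ) - 1) * (μ * |v i|) = (((spark D : ℝ) - 1) * μ) * |v i| by ring] at this
    nlinarith
  have : 1 / μ ≤ (spark D : ℝ) - 1 := by
    rw [div_le_iff₀ hmu]
    linarith
  linarith
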